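/- Let H be a real inner product space, L > 0, and F : H → H an L-Lipschitz operator. Let η, θ > 0 satisfy ηL ≤ 1/16 and θη ≤ 1/16. Then for all z, z', z*, y, y' ∈ H: (1/η)‖z − z*‖² + (1/(8η))‖z − z'‖² + (1/(2θ))‖y − y'‖² + 2⟨F(z) − F(z') − (y − y'), z* − z⟩ ≥ (1/(2η))‖z − z*‖². -/

import Mathlib

open scoped RealInnerProductSpace

/-- Lower bound `Ψ ≥ (1/(2η))‖z − z*‖²` for the Lyapunov function of Algorithm 1
(end of the proof of Lemma E.2). -/
theorem stmt_8 {H : Type*} [NormedAddCommGroup H] [InnerProductSpace ℝ H]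
    (L : ℝ) (hL : 0 < L) (F : H → H)
    (hF : ∀ u v : H, ‖F u - F v‖ ≤ L * ‖u - v‖)
    (η θ : ℝ) (hη : 0 < η) (hθ : 0 < θ)
    (hηL : η * L ≤ 1 / 16) (hθη : θ * η ≤ 1 / 16) :
    ∀ z z' zstar y y' : H,
      (1 / (2 * η)) * ‖z - zstar‖ ^ 2 ≤
        (1 / η) * ‖z - zstar‖ ^ 2 + (1 / (8 * η)) * ‖z - z'‖ ^ 2
          + (1 / (2 * θ)) * ‖y - y'‖ ^ 2
          + 2 * ⟪F z - F z' - (y - y'), zstar - z⟫ := by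
  intro z z' zstar y y'
  set a := F z - F z' - (y - y') with ha
  have h1 : |⟪a, zstar - z⟫| ≤ ‖a‖ * ‖zstar - z‖ := abs_real_inner_le_norm a _
  have h2 : ‖a‖ ≤ L * ‖z - z'‖ + ‖y - y'‖ := by
    calc ‖a‖ ≤ ‖F z - F z'‖ + ‖y - y'‖ := norm_sub_le _ _
    _ ≤ L * ‖z - z'‖ + ‖y - y'‖ := by linarith [hF z z']
  have h3 : ‖zstar - z‖ = ‖z - zstar‖ := norm_sub_rev _ _
  set r := ‖z - zstar‖
  set d := ‖z - z'‖
  set w := ‖y - y'‖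
  have hr : 0 ≤ r := norm_nonneg _
  have hd : 0 ≤ d := norm_nonneg _
  have hw : 0 ≤ w := norm_nonneg _
  have hna : 0 ≤ ‖a‖ := norm_nonneg _
  have h4 : -((L * d + w) * r) ≤ ⟪a, zstar - z⟫ := by
    have := neg_abs_le ⟪a, zstar - z⟫
    nlinarith [mul_le_mul_of_nonneg_right h2 hr]
  have key : 2 * (L * d + w) * r ≤ (1 / (2 * η)) * r ^ 2 + (1 / (8 * η)) * d ^ 2 + (1 / (2 * θ)) * w ^ 2 := by
    rw [← mul_le_mul_iff_of_pos_right (show (0:ℝ) < 8 * η * θ by positivity)]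
    have hrw : ((1 / (2 * η)) * r ^ 2 + (1 / (8 * η)) * d ^ 2 + (1 / (2 * θ)) * w ^ 2) * (8 * η * θ)
        = 4 * θ * r ^ 2 + θ * d ^ 2 + 4 * η * w ^ 2 := by
      field_simp; ring
    rw [hrw]
    have hC : 0 ≤ θ * d ^ 2 * (1 - 32 * η ^ 2 * L ^ 2) := by
      have h0 : 0 ≤ 1 / 16 - η * L := by linarith
      have h1 : 0 ≤ (1 / 16 - η * L) * (1 / 16 + η * L) :=
        mul_nonneg h0 (by positivity)
      have : 0 ≤ 1 - 32 * η ^ 2 * L ^ 2 := by nlinarith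
      positivity
    have hD : 0 ≤ η * w ^ 2 * (1 - 8 * θ * η) := by
      have : 0 ≤ 1 - 8 * θ * η := by linarith
      positivity
    nlinarith [mul_nonneg hθ.le (sq_nonneg (r - 4 * η * L * d)),
      mul_nonneg hθ.le (sq_nonneg (r - 4 * η * w)), hC, hD]
  have hhalf : 1 / η * r ^ 2 = 2 * (1 / (2 * η) * r ^ 2) := by
    field_simp
  linarith [key, h4, hhalf]
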